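/- Let n ≥ 1 and ϖ ≥ 1 be integers and s ∈ ℝⁿ, and consider the AP-B sequence m_0 = |s| (componentwise absolute value), m_{i+1} = P_{≥|s|}(P_ϖ m_i). Then there exist m† ∈ S_{≥|s|} ∩ S_ϖ, a real γ > 0, and r with 0 < r < 1 such that ‖m_i − m†‖₂ ≤ γ·rⁱ for all i ≥ 0 and ‖m_{i+1} − m†‖₂ ≤ ‖m_i − m†‖₂ for all i ≥ 0; in particular the sequence (m_i) converges to m†. -/

import Mathlib

open scoped BigOperators

noncomputable section

/-- Low-frequency index set `K_ω ⊆ {0,…,n−1}`. -/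
def Kset (n ω : ℕ) : Set (Fin n) := {k | (k : ℕ) ≤ ω - 1 ∨ n - ω + 1 ≤ (k : ℕ)}

/-- The set of ω-bandlimited real vectors `S_ω`. -/
def Sband (n ω : ℕ) : Set (EuclideanSpace ℝ (Fin n)) :=
  {x | ∀ k : Fin n, k ∉ Kset n ω →
    ∑ j : Fin n, (x j : ℂ) *
      Complex.exp (-(2 * (Real.pi : ℂ) * Complex.I * ((j : ℕ) : ℂ) * ((k : ℕ) : ℂ)) / (n : ℂ)) = 0}

/-- The constraint set `S_{≥|s|}`. -/
def Sgeq (n : ℕ) (s : EuclideanSpace ℝ (Fin n)) : Set (EuclideanSpace ℝ (Fin n)) :=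
  {x | ∀ j, |s j| ≤ x j}

/-- The metric projection onto `S_{≥|s|}`: componentwise `max(z_j, |s_j|)`. -/
def Pgeq (n : ℕ) (s z : EuclideanSpace ℝ (Fin n)) : EuclideanSpace ℝ (Fin n) :=
  (WithLp.equiv 2 (Fin n → ℝ)).symm (fun j => max (z j) |s j|)

/-- The rectangular low-pass filter `P_ϖ` (the orthogonal projection onto `S_ϖ`):
`(P_ϖ z)_j = (1/n)·Σ_{k∈K_ϖ} Σ_{l} z_l·cos(2πk(j−l)/n)`. -/
def Pband (n ϖ : ℕ) (z : EuclideanSpace ℝ (Fin n)) : EuclideanSpace ℝ (Fin n) :=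
  (WithLp.equiv 2 (Fin n → ℝ)).symm (fun j =>
    (1 / (n : ℝ)) *
      ∑ k ∈ Finset.univ.filter (fun k : Fin n => (k : ℕ) ≤ ϖ - 1 ∨ n - ϖ + 1 ≤ (k : ℕ)),
        ∑ l : Fin n, z l * Real.cos (2 * Real.pi * (k : ℕ) * (((j : ℕ) : ℝ) - ((l : ℕ) : ℝ)) / (n : ℝ)))

section AuxAPB
open Complex Finset

/-- complex character -/
def ec (n : ℕ) (t : ℤ) : ℂ := Complex.exp (2 * (Real.pi : ℂ) * Complex.I * t / n)

lemma ec_add (n : ℕ) (a b : ℤ) : ec n (a + b) = ec n a * ec n b := by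
  rw [ec, ec, ec, ← Complex.exp_add]
  congr 1
  push_cast
  ring

lemma Pband_apply (n ϖ : ℕ) (z : EuclideanSpace ℝ (Fin n)) (j : Fin n) :
    Pband n ϖ z j =
      (1 / (n : ℝ)) *
      ∑ k ∈ Finset.univ.filter (fun k : Fin n => (k : ℕ) ≤ ϖ - 1 ∨ n - ϖ + 1 ≤ (k : ℕ)),
        ∑ l : Fin n, z l * Real.cos (2 * Real.pi * (k : ℕ) * (((j : ℕ) : ℝ) - ((l : ℕ) : ℝ)) / (n : ℝ)) := rfl

lemma cos_as_ec (n : ℕ) (k j l : ℕ) :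
    ((Real.cos (2 * Real.pi * (k : ℝ) * (((j : ℕ) : ℝ) - ((l : ℕ) : ℝ)) / (n : ℝ)) : ℝ) : ℂ)
      = (ec n ((k : ℤ) * ((j : ℤ) - (l : ℤ))) + ec n (-((k : ℤ) * ((j : ℤ) - (l : ℤ))))) / 2 := by
  rw [Complex.ofReal_cos]
  have h2 := Complex.two_cos (x := ((2 * Real.pi * (k : ℝ) * (((j : ℕ) : ℝ) - ((l : ℕ) : ℝ)) / (n : ℝ) : ℝ) : ℂ))
  have : Complex.cos ((2 * Real.pi * (k : ℝ) * (((j : ℕ) : ℝ) - ((l : ℕ) : ℝ)) / (n : ℝ) : ℝ) : ℂ)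
      = (Complex.exp (((2 * Real.pi * (k : ℝ) * (((j : ℕ) : ℝ) - ((l : ℕ) : ℝ)) / (n : ℝ) : ℝ) : ℂ) * Complex.I)
        + Complex.exp (-((2 * Real.pi * (k : ℝ) * (((j : ℕ) : ℝ) - ((l : ℕ) : ℝ)) / (n : ℝ) : ℝ) : ℂ) * Complex.I)) / 2 := by
    linear_combination h2 / 2
  rw [this, ec, ec]
  congr 2
  · congr 1
    push_cast
    ring
  · congr 1
    push_cast
    ring

lemma sband_exp_eq (n : ℕ) (j k : Fin n) :
    Complex.exp (-(2 * (Real.pi : ℂ) * Complex.I * ((j : ℕ) : ℂ) * ((k : ℕ) : ℂ)) / (n : ℂ))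
      = ec n (-((j : ℤ) * (k : ℤ))) := by
  rw [ec]; congr 1; push_cast; ring

lemma sum_exp_fin (n : ℕ) (hn : 0 < n) (t : ℤ) :
    ∑ j : Fin n, Complex.exp (2 * (Real.pi:ℂ) * Complex.I * t * j / n)
      = if (n:ℤ) ∣ t then (n:ℂ) else 0 := by
  have hne : (n:ℂ) ≠ 0 := Nat.cast_ne_zero.mpr hn.ne'
  set w : ℂ := Complex.exp (2 * (Real.pi:ℂ) * Complex.I * t / n) with hw
  have hterm : ∀ j : Fin n,
      Complex.exp (2 * (Real.pi:ℂ) * Complex.I * t * j / n) = w ^ (j:ℕ) := by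
    intro j
    rw [hw, ← Complex.exp_nat_mul]
    ring_nf
  have hwn : w ^ n = 1 := by
    rw [hw, ← Complex.exp_nat_mul]
    have : (n:ℂ) * (2 * (Real.pi:ℂ) * Complex.I * t / n) = t * (2 * Real.pi * Complex.I) := by
      field_simp
    rw [this, Complex.exp_int_mul_two_pi_mul_I]
  have hw1 : w = 1 ↔ (n:ℤ) ∣ t := by
    rw [hw, Complex.exp_eq_one_iff]
    constructor
    · rintro ⟨m, hm⟩
      refine ⟨m, ?_⟩
      have hπ : (Real.pi:ℂ) ≠ 0 := Complex.ofReal_ne_zero.mpr Real.pi_ne_zero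
      have h2 : (2:ℂ) * Real.pi * Complex.I ≠ 0 := by
        simp [Complex.I_ne_zero, hπ]
      have : (t:ℂ) = n * m := by
        field_simp at hm
        have := mul_left_cancel₀ h2 (by linear_combination (2 * Real.pi * Complex.I) * hm :
          (2:ℂ) * Real.pi * Complex.I * t = 2 * Real.pi * Complex.I * (n * m))
        exact this
      exact_mod_cast this
    · rintro ⟨m, rfl⟩
      exact ⟨m, by push_cast; field_simp⟩
  simp only [hterm]
  rw [Fin.sum_univ_eq_sum_range]
  by_cases h : (n:ℤ) ∣ t
  · rw [if_pos h]
    have : w = 1 := hw1.mpr h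
    simp [this]
  · rw [if_neg h]
    have hwne : w ≠ 1 := fun hh => h (hw1.mp hh)
    rw [geom_sum_eq hwne, hwn]
    simp

lemma sum_ec (n : ℕ) (hn : 0 < n) (t : ℤ) :
    ∑ j : Fin n, ec n ((j : ℤ) * t) = if (n:ℤ) ∣ t then (n:ℂ) else 0 := by
  rw [← sum_exp_fin n hn t]
  refine Finset.sum_congr rfl fun j _ => ?_
  rw [ec]
  congr 1
  push_cast
  ring

lemma Kfacts (n ϖ : ℕ) (hϖ : 1 ≤ ϖ) (k k' : Fin n)
    (hk : (k:ℕ) ≤ ϖ-1 ∨ n-ϖ+1 ≤ (k:ℕ)) (hk' : ¬((k':ℕ) ≤ ϖ-1 ∨ n-ϖ+1 ≤ (k':ℕ))) :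
    ¬ ((n:ℤ) ∣ ((k:ℕ):ℤ) - ((k':ℕ):ℤ)) ∧ ¬ ((n:ℤ) ∣ ((k:ℕ):ℤ) + ((k':ℕ):ℤ)) := by
  push_neg at hk'
  have h1 := k.isLt
  have h2 := k'.isLt
  constructor
  · intro hdvd
    have h0 : ((k:ℕ):ℤ) - ((k':ℕ):ℤ) = 0 :=
      Int.eq_zero_of_abs_lt_dvd hdvd (abs_lt.mpr ⟨by omega, by omega⟩)
    omega
  · intro hdvd
    have h0 : ((k:ℕ):ℤ) + ((k':ℕ):ℤ) - (n:ℤ) = 0 :=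
      Int.eq_zero_of_abs_lt_dvd (dvd_sub hdvd ⟨1, by ring⟩) (abs_lt.mpr ⟨by omega, by omega⟩)
    omega

lemma Pband_mem_Sband (n ϖ : ℕ) (hn : 0 < n) (hϖ : 1 ≤ ϖ)
    (z : EuclideanSpace ℝ (Fin n)) : Pband n ϖ z ∈ Sband n ϖ := by
  intro k' hk'
  simp only [Kset, Set.mem_setOf_eq] at hk'
  have expand : ∀ j : Fin n, ((Pband n ϖ z j : ℝ) : ℂ) =
      (1/(n:ℂ)) * ∑ k ∈ Finset.univ.filter (fun k : Fin n => (k : ℕ) ≤ ϖ - 1 ∨ n - ϖ + 1 ≤ (k : ℕ)),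
        ∑ l : Fin n, (z l : ℂ) *
          ((ec n ((k:ℕ) * (((j:ℕ):ℤ) - ((l:ℕ):ℤ))) + ec n (-((k:ℕ) * (((j:ℕ):ℤ) - ((l:ℕ):ℤ))))) / 2) := by
    intro j
    rw [Pband_apply]
    simp only [Complex.ofReal_mul, Complex.ofReal_sum, Complex.ofReal_div,
      Complex.ofReal_one, Complex.ofReal_natCast, cos_as_ec]
  simp only [expand, sband_exp_eq]
  have key : ∀ k ∈ Finset.univ.filter (fun k : Fin n => (k : ℕ) ≤ ϖ - 1 ∨ n - ϖ + 1 ≤ (k : ℕ)),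
      ∀ l : Fin n,
      ∑ j : Fin n, ((ec n ((k:ℕ) * (((j:ℕ):ℤ) - ((l:ℕ):ℤ))) + ec n (-((k:ℕ) * (((j:ℕ):ℤ) - ((l:ℕ):ℤ))))) / 2)
        * ec n (-(((j:ℕ):ℤ) * ((k':ℕ):ℤ))) = 0 := by
    intro k hk l
    rw [Finset.mem_filter] at hk
    obtain ⟨hd1, hd2⟩ := Kfacts n ϖ hϖ k k' hk.2 hk'
    have e1 : ∀ j : Fin n,
        ((ec n ((k:ℕ) * (((j:ℕ):ℤ) - ((l:ℕ):ℤ))) + ec n (-((k:ℕ) * (((j:ℕ):ℤ) - ((l:ℕ):ℤ))))) / 2)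
          * ec n (-(((j:ℕ):ℤ) * ((k':ℕ):ℤ)))
        = (ec n (-((k:ℕ) * (l:ℕ))) * ec n (((j:ℕ):ℤ) * (((k:ℕ):ℤ) - ((k':ℕ):ℤ)))
          + ec n ((k:ℕ) * (l:ℕ)) * ec n (((j:ℕ):ℤ) * (-(((k:ℕ):ℤ) + ((k':ℕ):ℤ))))) / 2 := by
      intro j
      rw [div_mul_eq_mul_div, add_mul, ← ec_add, ← ec_add, ← ec_add, ← ec_add]
      congr 3 <;> push_cast <;> ring
    simp only [e1]
    rw [← Finset.sum_div, Finset.sum_add_distrib, ← Finset.mul_sum, ← Finset.mul_sum,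
      sum_ec n hn, sum_ec n hn]
    rw [if_neg hd1, if_neg (by rwa [Int.dvd_neg])]
    simp
  simp only [Finset.mul_sum, Finset.sum_mul]
  rw [Finset.sum_comm]
  refine Finset.sum_eq_zero fun k hk => ?_
  rw [Finset.sum_comm]
  refine Finset.sum_eq_zero fun l _ => ?_
  rw [← mul_zero ((1:ℂ)/(n:ℂ) * ((z l : ℝ) : ℂ)), ← key k hk l, Finset.mul_sum]
  exact Finset.sum_congr rfl fun j _ => by ring

lemma ec_eq (n : ℕ) {a b : ℤ} (h : a = b) : ec n a = ec n b := by rw [h]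

lemma ec_int_mul_n (n : ℕ) (hn : 0 < n) (l : ℤ) : ec n (l * n) = 1 := by
  rw [ec]
  have hne : (n:ℂ) ≠ 0 := Nat.cast_ne_zero.mpr hn.ne'
  rw [show 2 * (Real.pi:ℂ) * Complex.I * ((l * n : ℤ):ℂ) / n = (l:ℂ) * (2 * Real.pi * Complex.I) by
    push_cast; field_simp]
  exact Complex.exp_int_mul_two_pi_mul_I l

lemma Pband_coe (n ϖ : ℕ) (z : EuclideanSpace ℝ (Fin n)) (j : Fin n) :
    ((Pband n ϖ z j : ℝ) : ℂ) =
      (1/(n:ℂ)) * ∑ k ∈ Finset.univ.filter (fun k : Fin n => (k : ℕ) ≤ ϖ - 1 ∨ n - ϖ + 1 ≤ (k : ℕ)),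
        ∑ l : Fin n, (z l : ℂ) *
          ((ec n ((k:ℕ) * (((j:ℕ):ℤ) - ((l:ℕ):ℤ))) + ec n (-((k:ℕ) * (((j:ℕ):ℤ) - ((l:ℕ):ℤ))))) / 2) := by
  rw [Pband_apply]
  simp only [Complex.ofReal_mul, Complex.ofReal_sum, Complex.ofReal_div,
    Complex.ofReal_one, Complex.ofReal_natCast, cos_as_ec]

lemma not_dvd_sub (n : ℕ) (j l : Fin n) (h : l ≠ j) : ¬ ((n:ℤ) ∣ ((j:ℕ):ℤ) - ((l:ℕ):ℤ)) := by
  intro hdvd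
  have hjl := j.isLt
  have hll := l.isLt
  have h0 := Int.eq_zero_of_abs_lt_dvd hdvd (abs_lt.mpr ⟨by omega, by omega⟩)
  exact h (Fin.ext (by omega))

lemma Pband_fix (n ϖ : ℕ) (hn : 0 < n) (hϖ : 1 ≤ ϖ)
    (d : EuclideanSpace ℝ (Fin n)) (hd : d ∈ Sband n ϖ) : Pband n ϖ d = d := by
  have hdft : ∀ k : Fin n, ¬((k:ℕ) ≤ ϖ - 1 ∨ n - ϖ + 1 ≤ (k:ℕ)) →
      ∑ l : Fin n, (d l : ℂ) * ec n (-(((l:ℕ):ℤ) * ((k:ℕ):ℤ))) = 0 := by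
    intro k hk
    have := hd k (by simpa [Kset] using hk)
    rw [← this]
    exact Finset.sum_congr rfl fun l _ => by rw [sband_exp_eq]
  ext j
  have key : ((Pband n ϖ d j : ℝ) : ℂ) = ((d j : ℝ) : ℂ) := by
    rw [Pband_coe]
    have hfull : ∑ k ∈ Finset.univ.filter (fun k : Fin n => (k : ℕ) ≤ ϖ - 1 ∨ n - ϖ + 1 ≤ (k : ℕ)),
        ∑ l : Fin n, (d l : ℂ) *
          ((ec n ((k:ℕ) * (((j:ℕ):ℤ) - ((l:ℕ):ℤ))) + ec n (-((k:ℕ) * (((j:ℕ):ℤ) - ((l:ℕ):ℤ))))) / 2)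
        = ∑ k : Fin n, ∑ l : Fin n, (d l : ℂ) *
          ((ec n ((k:ℕ) * (((j:ℕ):ℤ) - ((l:ℕ):ℤ))) + ec n (-((k:ℕ) * (((j:ℕ):ℤ) - ((l:ℕ):ℤ))))) / 2) := by
      refine Finset.sum_subset (Finset.subset_univ _) fun k _ hk => ?_
      rw [Finset.mem_filter] at hk
      push_neg at hk
      obtain ⟨hka, hkb⟩ := hk (Finset.mem_univ k)
      have hknotK : ¬((k:ℕ) ≤ ϖ - 1 ∨ n - ϖ + 1 ≤ (k:ℕ)) := by omega
      have hk1 : 1 ≤ (k:ℕ) := by omega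
      have hklt := k.isLt
      have hk2 : (k:ℕ) + ϖ ≤ n := by omega
      set k'' : Fin n := ⟨n - (k:ℕ), by omega⟩ with hk''
      have hk''val : (k'':ℕ) = n - (k:ℕ) := rfl
      have hk''notK : ¬((k'':ℕ) ≤ ϖ - 1 ∨ n - ϖ + 1 ≤ (k'':ℕ)) := by
        rw [hk''val]
        omega
      have split : ∀ l : Fin n, (d l : ℂ) *
          ((ec n ((k:ℕ) * (((j:ℕ):ℤ) - ((l:ℕ):ℤ))) + ec n (-((k:ℕ) * (((j:ℕ):ℤ) - ((l:ℕ):ℤ))))) / 2)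
          = (ec n ((k:ℕ) * (j:ℕ)) * ((d l : ℂ) * ec n (-(((l:ℕ):ℤ) * ((k:ℕ):ℤ))))
            + ec n (-((k:ℕ) * ((j:ℕ):ℤ))) * ((d l : ℂ) * ec n (-(((l:ℕ):ℤ) * ((k'':ℕ):ℤ))))) / 2 := by
        intro l
        have e1 : ec n ((k:ℕ) * (((j:ℕ):ℤ) - ((l:ℕ):ℤ)))
            = ec n ((k:ℕ) * (j:ℕ)) * ec n (-(((l:ℕ):ℤ) * ((k:ℕ):ℤ))) := by
          rw [← ec_add]; exact ec_eq n (by push_cast; ring)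
        have e2 : ec n (-((k:ℕ) * (((j:ℕ):ℤ) - ((l:ℕ):ℤ))))
            = ec n (-((k:ℕ) * ((j:ℕ):ℤ))) * ec n (-(((l:ℕ):ℤ) * ((k'':ℕ):ℤ))) * ec n ((l:ℕ) * (n:ℤ)) := by
          rw [← ec_add, ← ec_add]
          refine ec_eq n ?_
          have hcast : ((k'':ℕ):ℤ) = (n:ℤ) - ((k:ℕ):ℤ) := by
            rw [hk''val]
            push_cast [Nat.cast_sub hklt.le]
            ring
          rw [hcast]; push_cast; ring
        rw [e1, e2, ec_int_mul_n n hn, mul_one]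
        ring
      simp only [split]
      rw [← Finset.sum_div, Finset.sum_add_distrib, ← Finset.mul_sum, ← Finset.mul_sum,
        hdft k hknotK, hdft k'' hk''notK]
      simp
    rw [hfull, Finset.sum_comm]
    have inner : ∀ l : Fin n, ∑ k : Fin n, (d l : ℂ) *
        ((ec n ((k:ℕ) * (((j:ℕ):ℤ) - ((l:ℕ):ℤ))) + ec n (-((k:ℕ) * (((j:ℕ):ℤ) - ((l:ℕ):ℤ))))) / 2)
        = if l = j then (d l : ℂ) * n else 0 := by
      intro l
      rw [← Finset.mul_sum]
      have e3 : ∀ k : Fin n, (ec n ((k:ℕ) * (((j:ℕ):ℤ) - ((l:ℕ):ℤ))) + ec n (-((k:ℕ) * (((j:ℕ):ℤ) - ((l:ℕ):ℤ))))) / 2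
          = (ec n ((k:ℕ) * (((j:ℕ):ℤ) - ((l:ℕ):ℤ))) + ec n ((k:ℕ) * (((l:ℕ):ℤ) - ((j:ℕ):ℤ)))) / 2 := by
        intro k
        congr 2
        exact ec_eq n (by ring)
      simp only [e3]
      rw [← Finset.sum_div, Finset.sum_add_distrib, sum_ec n hn, sum_ec n hn]
      by_cases h : l = j
      · subst h
        have h1 : ((n:ℤ) ∣ ((l:ℕ):ℤ) - ((l:ℕ):ℤ)) := by simp
        rw [if_pos h1, if_pos (rfl : l = l)]
        ring
      · rw [if_neg (not_dvd_sub n j l h), if_neg (not_dvd_sub n l j (fun hh => h hh.symm)),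
          if_neg h]
        simp
    simp only [inner]
    rw [Finset.sum_ite_eq' Finset.univ j (fun l => (d l : ℂ) * n)]
    rw [if_pos (Finset.mem_univ j)]
    have hne : (n:ℂ) ≠ 0 := Nat.cast_ne_zero.mpr hn.ne'
    field_simp
  exact_mod_cast key

lemma Pband_symm (n ϖ : ℕ) (z w : EuclideanSpace ℝ (Fin n)) :
    ∑ j : Fin n, Pband n ϖ z j * w j = ∑ j : Fin n, z j * Pband n ϖ w j := by
  simp only [Pband_apply, Finset.sum_mul, Finset.mul_sum]
  rw [Finset.sum_comm]
  conv_rhs => rw [Finset.sum_comm]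
  refine Finset.sum_congr rfl fun k _ => ?_
  rw [Finset.sum_comm]
  refine Finset.sum_congr rfl fun j _ => Finset.sum_congr rfl fun l _ => ?_
  have h : Real.cos (2*Real.pi*((k:ℕ):ℝ)*(((l:ℕ):ℝ) - ((j:ℕ):ℝ))/(n:ℝ))
      = Real.cos (2*Real.pi*((k:ℕ):ℝ)*(((j:ℕ):ℝ) - ((l:ℕ):ℝ))/(n:ℝ)) := by
    rw [show 2*Real.pi*((k:ℕ):ℝ)*(((l:ℕ):ℝ) - ((j:ℕ):ℝ))/(n:ℝ)
        = -(2*Real.pi*((k:ℕ):ℝ)*(((j:ℕ):ℝ) - ((l:ℕ):ℝ))/(n:ℝ)) by ring, Real.cos_neg]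
  rw [h]
  ring

lemma const_mem_Sband (n ϖ : ℕ) (hn : 0 < n) (hϖ : 1 ≤ ϖ) (c : ℝ) :
    (WithLp.equiv 2 (Fin n → ℝ)).symm (fun _ => c) ∈ Sband n ϖ := by
  intro k hk
  simp only [Kset, Set.mem_setOf_eq] at hk
  have hk1 : 1 ≤ (k:ℕ) := by omega
  have hklt := k.isLt
  have happ : ∀ j : Fin n, ((WithLp.equiv 2 (Fin n → ℝ)).symm (fun _ => c)) j = c :=
    fun j => rfl
  simp only [happ, sband_exp_eq]
  have e : ∀ j : Fin n, (c:ℂ) * ec n (-(((j:ℕ):ℤ) * ((k:ℕ):ℤ)))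
      = (c:ℂ) * ec n (((j:ℕ):ℤ) * (-((k:ℕ):ℤ))) := by
    intro j
    rw [ec_eq n (show -(((j:ℕ):ℤ) * ((k:ℕ):ℤ)) = ((j:ℕ):ℤ) * (-((k:ℕ):ℤ)) by ring)]
  simp only [e]
  rw [← Finset.mul_sum, sum_ec n hn, if_neg, mul_zero]
  rw [Int.dvd_neg]
  intro hdvd
  have h0 := Int.eq_zero_of_abs_lt_dvd hdvd (abs_lt.mpr ⟨by omega, by omega⟩)
  omega

lemma Pband_sub (n ϖ : ℕ) (x y : EuclideanSpace ℝ (Fin n)) :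
    Pband n ϖ (x - y) = Pband n ϖ x - Pband n ϖ y := by
  ext j
  have hsub : ∀ (a b : EuclideanSpace ℝ (Fin n)) (i : Fin n), (a - b) i = a i - b i :=
    fun a b i => rfl
  rw [hsub]
  simp only [Pband_apply, hsub]
  rw [← mul_sub, ← Finset.sum_sub_distrib]
  congr 1
  refine Finset.sum_congr rfl fun k _ => ?_
  rw [← Finset.sum_sub_distrib]
  exact Finset.sum_congr rfl fun l _ => by ring

open scoped RealInnerProductSpace

section Geometry

variable {n ϖ : ℕ}

lemma inner_sum' (x y : EuclideanSpace ℝ (Fin n)) : ⟪x, y⟫ = ∑ j, x j * y j := by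
  simp [PiLp.inner_apply, RCLike.inner_apply, mul_comm]

lemma abs_coord_le_norm (x : EuclideanSpace ℝ (Fin n)) (j : Fin n) : |x j| ≤ ‖x‖ := by
  rw [EuclideanSpace.norm_eq]
  rw [(Real.sqrt_sq_eq_abs (x j)).symm]
  apply Real.sqrt_le_sqrt
  have := Finset.single_le_sum (f := fun i => ‖x i‖^2) (fun i _ => sq_nonneg _) (Finset.mem_univ j)
  simpa [Real.norm_eq_abs, sq_abs] using this

lemma Pband_orth (hn : 0 < n) (hϖ : 1 ≤ ϖ) (z : EuclideanSpace ℝ (Fin n))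
    {d : EuclideanSpace ℝ (Fin n)} (hd : d ∈ Sband n ϖ) :
    ⟪z - Pband n ϖ z, d⟫ = 0 := by
  rw [inner_sum']
  have hsub : ∀ j : Fin n, (z - Pband n ϖ z) j = z j - Pband n ϖ z j := fun _ => rfl
  simp only [hsub, sub_mul]
  rw [Finset.sum_sub_distrib, Pband_symm n ϖ z d, Pband_fix n ϖ hn hϖ d hd, sub_self]

lemma Pband_nonexp (hn : 0 < n) (hϖ : 1 ≤ ϖ) (z : EuclideanSpace ℝ (Fin n)) :
    ‖Pband n ϖ z‖ ≤ ‖z‖ := by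
  have horth : ⟪z - Pband n ϖ z, Pband n ϖ z⟫ = 0 :=
    Pband_orth hn hϖ z (Pband_mem_Sband n ϖ hn hϖ z)
  have hz : z = (z - Pband n ϖ z) + Pband n ϖ z := by abel
  have h2 : ‖z‖^2 = ‖z - Pband n ϖ z‖^2 + ‖Pband n ϖ z‖^2 := by
    nth_rewrite 1 [hz]
    rw [norm_add_sq_real, horth]
    ring
  have h3 : ‖Pband n ϖ z‖^2 ≤ ‖z‖^2 := by nlinarith [sq_nonneg ‖z - Pband n ϖ z‖]
  nlinarith [norm_nonneg (Pband n ϖ z), norm_nonneg z]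

lemma Pband_nonexp' (hn : 0 < n) (hϖ : 1 ≤ ϖ) (z : EuclideanSpace ℝ (Fin n))
    {c : EuclideanSpace ℝ (Fin n)} (hc : c ∈ Sband n ϖ) :
    ‖Pband n ϖ z - c‖ ≤ ‖z - c‖ := by
  have : Pband n ϖ z - c = Pband n ϖ (z - c) := by
    rw [Pband_sub, Pband_fix n ϖ hn hϖ c hc]
  rw [this]
  exact Pband_nonexp hn hϖ _

lemma Pgeq_apply (s z : EuclideanSpace ℝ (Fin n)) (j : Fin n) :
    Pgeq n s z j = max (z j) |s j| := rfl

lemma Pgeq_mem (s z : EuclideanSpace ℝ (Fin n)) : Pgeq n s z ∈ Sgeq n s :=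
  fun j => le_max_right _ _

lemma Pgeq_fix (s : EuclideanSpace ℝ (Fin n)) {c : EuclideanSpace ℝ (Fin n)}
    (hc : c ∈ Sgeq n s) : Pgeq n s c = c := by
  ext j
  rw [Pgeq_apply, max_eq_left (hc j)]

lemma Pgeq_firm (s z : EuclideanSpace ℝ (Fin n)) {c : EuclideanSpace ℝ (Fin n)}
    (hc : c ∈ Sgeq n s) :
    ‖Pgeq n s z - c‖^2 + ‖z - Pgeq n s z‖^2 ≤ ‖z - c‖^2 := by
  have hobtuse : ⟪z - Pgeq n s z, c - Pgeq n s z⟫ ≤ 0 := by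
    rw [inner_sum']
    apply Finset.sum_nonpos
    intro j _
    have h1 : (z - Pgeq n s z) j = z j - max (z j) |s j| := rfl
    have h2 : (c - Pgeq n s z) j = c j - max (z j) |s j| := rfl
    rw [h1, h2]
    rcases le_or_gt (|s j|) (z j) with h | h
    · rw [max_eq_left h]; simp
    · rw [max_eq_right h.le]
      apply mul_nonpos_of_nonpos_of_nonneg
      · linarith
      · linarith [hc j]
  have hid : z - c = (z - Pgeq n s z) + (Pgeq n s z - c) := by abel
  have h2 : ‖z - c‖^2 = ‖z - Pgeq n s z‖^2 + 2*⟪z - Pgeq n s z, Pgeq n s z - c⟫ + ‖Pgeq n s z - c‖^2 := by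
    rw [hid, norm_add_sq_real]
  have h3 : ⟪z - Pgeq n s z, Pgeq n s z - c⟫ = -⟪z - Pgeq n s z, c - Pgeq n s z⟫ := by
    rw [← inner_neg_right]
    congr 1
    abel
  nlinarith [hobtuse]

lemma Pgeq_nonexp (s z : EuclideanSpace ℝ (Fin n)) {c : EuclideanSpace ℝ (Fin n)}
    (hc : c ∈ Sgeq n s) : ‖Pgeq n s z - c‖ ≤ ‖z - c‖ := by
  have := Pgeq_firm s z hc
  nlinarith [norm_nonneg (Pgeq n s z - c), norm_nonneg (z - c), sq_nonneg ‖z - Pgeq n s z‖]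

lemma Pgeq_closest (s z : EuclideanSpace ℝ (Fin n)) {c : EuclideanSpace ℝ (Fin n)}
    (hc : c ∈ Sgeq n s) : ‖z - Pgeq n s z‖ ≤ ‖z - c‖ := by
  have := Pgeq_firm s z hc
  nlinarith [norm_nonneg (z - Pgeq n s z), norm_nonneg (z - c), sq_nonneg ‖Pgeq n s z - c‖]

end Geometry

section Sets

open Metric

variable {n ϖ : ℕ}

lemma coord_continuous (j : Fin n) : Continuous fun x : EuclideanSpace ℝ (Fin n) => x j :=
  (continuous_apply j).comp (PiLp.continuous_ofLp (p := 2) (β := fun _ : Fin n => ℝ))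

lemma isClosed_Sgeq (s : EuclideanSpace ℝ (Fin n)) : IsClosed (Sgeq n s) := by
  have : Sgeq n s = ⋂ j, {x : EuclideanSpace ℝ (Fin n) | |s j| ≤ x j} := by
    ext x; simp [Sgeq, Set.mem_iInter]
  rw [this]
  exact isClosed_iInter fun j => isClosed_le continuous_const (coord_continuous j)

lemma isClosed_Sband : IsClosed (Sband n ϖ) := by
  have : Sband n ϖ = ⋂ k, ⋂ (_ : k ∉ Kset n ϖ),
      {x : EuclideanSpace ℝ (Fin n) | ∑ j : Fin n, (x j : ℂ) *
        Complex.exp (-(2 * (Real.pi : ℂ) * Complex.I * ((j : ℕ) : ℂ) * ((k : ℕ) : ℂ)) / (n : ℂ)) = 0} := by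
    ext x; simp [Sband, Set.mem_iInter]
  rw [this]
  refine isClosed_iInter fun k => isClosed_iInter fun _ => isClosed_eq ?_ continuous_const
  refine continuous_finset_sum _ fun j _ => ?_
  exact (Complex.continuous_ofReal.comp (coord_continuous j)).mul continuous_const

/-- the interior point of the intersection: the constant vector `‖s‖ + 1` -/
def zcen (n : ℕ) (s : EuclideanSpace ℝ (Fin n)) : EuclideanSpace ℝ (Fin n) :=
  (WithLp.equiv 2 (Fin n → ℝ)).symm (fun _ => ‖s‖ + 1)

lemma zcen_mem (hn : 0 < n) (hϖ : 1 ≤ ϖ) (s : EuclideanSpace ℝ (Fin n)) :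
    zcen n s ∈ Sgeq n s ∩ Sband n ϖ := by
  constructor
  · intro j
    have := abs_coord_le_norm s j
    have happ : zcen n s j = ‖s‖ + 1 := rfl
    rw [happ]; linarith
  · exact const_mem_Sband n ϖ hn hϖ _

lemma le_of_sq_le_sq' {a b : ℝ} (h : a^2 ≤ b^2) (hb : 0 ≤ b) : a ≤ b := by
  nlinarith [sq_nonneg (a - b), sq_nonneg (a + b)]

lemma near_ball (hn : 0 < n) (hϖ : 1 ≤ ϖ) (s : EuclideanSpace ℝ (Fin n))
    (u : EuclideanSpace ℝ (Fin n)) (hu : u ∈ Sband n ϖ) :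
    ∃ y ∈ Sgeq n s ∩ Sband n ϖ, ‖u - y‖ ≤ ‖u - zcen n s‖ * ‖u - Pgeq n s u‖ := by
  set p := Pgeq n s u with hp
  set d := ‖u - p‖ with hd
  rcases eq_or_lt_of_le (norm_nonneg (u - p)) with hd0 | hd0
  · -- u ∈ Sgeq already
    have hup : u = p := by
      have := (norm_eq_zero.mp hd0.symm)
      rwa [sub_eq_zero] at this
    refine ⟨u, ⟨?_, hu⟩, ?_⟩
    · rw [hup]; exact Pgeq_mem s u
    · rw [sub_self, norm_zero]
      exact mul_nonneg (norm_nonneg _) (norm_nonneg _)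
  · have h1d : 0 < 1 + d := by linarith
    set a : ℝ := 1/(1+d) with ha
    set b : ℝ := d/(1+d) with hb
    set y := a • u + b • zcen n s with hy
    have happ : ∀ j, y j = a * u j + b * (‖s‖ + 1) := fun j => rfl
    have hmemgeq : y ∈ Sgeq n s := by
      intro j
      rw [happ]
      have h1 : |u j - p j| ≤ d := by
        have : (u - p) j = u j - p j := rfl
        rw [← this]; exact abs_coord_le_norm (u - p) j
      have h2 : |s j| ≤ p j := Pgeq_mem s u j
      have h3 : |s j| ≤ ‖s‖ := abs_coord_le_norm s j
      have h4 : p j - d ≤ u j := by have := abs_le.mp h1; linarith [this.1]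
      rw [ha, hb, div_mul_eq_mul_div, div_mul_eq_mul_div, ← add_div,
        le_div_iff₀ h1d]
      nlinarith
    have hmemband : y ∈ Sband n ϖ := by
      intro k hk
      have hu0 := hu k hk
      have hz0 := const_mem_Sband n ϖ hn hϖ (‖s‖ + 1) k hk
      have hzapp : ∀ j : Fin n, ((WithLp.equiv 2 (Fin n → ℝ)).symm (fun _ => ‖s‖ + 1) : EuclideanSpace ℝ (Fin n)) j = ‖s‖ + 1 := fun j => rfl
      simp only [hzapp] at hz0
      have hcast : ∀ j : Fin n, ((y j : ℝ) : ℂ) = (a:ℂ) * ((u j : ℝ):ℂ) + (b:ℂ) * ((‖s‖ + 1 : ℝ):ℂ) := by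
        intro j; rw [happ]; push_cast; ring
      have expand : ∑ j : Fin n, ((y j : ℝ) : ℂ) *
            Complex.exp (-(2 * (Real.pi : ℂ) * Complex.I * ((j : ℕ) : ℂ) * ((k : ℕ) : ℂ)) / (n : ℂ))
          = (a:ℂ) * ∑ j : Fin n, ((u j : ℝ) : ℂ) *
            Complex.exp (-(2 * (Real.pi : ℂ) * Complex.I * ((j : ℕ) : ℂ) * ((k : ℕ) : ℂ)) / (n : ℂ))
          + (b:ℂ) * ∑ j : Fin n, ((‖s‖ + 1 : ℝ) : ℂ) *
            Complex.exp (-(2 * (Real.pi : ℂ) * Complex.I * ((j : ℕ) : ℂ) * ((k : ℕ) : ℂ)) / (n : ℂ)) := by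
        rw [Finset.mul_sum, Finset.mul_sum, ← Finset.sum_add_distrib]
        exact Finset.sum_congr rfl fun j _ => by rw [hcast]; ring
      rw [expand, hu0, hz0]
      ring
    refine ⟨y, ⟨hmemgeq, hmemband⟩, ?_⟩
    have hdiff : u - y = b • (u - zcen n s) := by
      ext j
      have e1 : (u - y) j = u j - y j := rfl
      have e2 : (u - zcen n s) j = u j - (‖s‖ + 1) := rfl
      have e3 : (b • (u - zcen n s)) j = b * ((u - zcen n s) j) := rfl
      rw [e1, e3, e2, happ, ha, hb]
      field_simp
      ring
    rw [hdiff, norm_smul, Real.norm_eq_abs]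
    have habs : |b| = b := abs_of_nonneg (by rw [hb]; positivity)
    rw [habs, hb, mul_comm (‖u - zcen n s‖) d]
    apply mul_le_mul_of_nonneg_right _ (norm_nonneg _)
    rw [div_le_iff₀ h1d]
    nlinarith [hd0]

lemma infdist_step (hn : 0 < n) (hϖ : 1 ≤ ϖ) (s : EuclideanSpace ℝ (Fin n))
    (R : ℝ) (hR : 1 ≤ R) (x : EuclideanSpace ℝ (Fin n))
    (hx : ‖x - zcen n s‖ ≤ R) :
    infDist (Pgeq n s (Pband n ϖ x)) (Sgeq n s ∩ Sband n ϖ)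
      ≤ Real.sqrt (1 - 1/R^2) * infDist x (Sgeq n s ∩ Sband n ϖ) := by
  set F := Sgeq n s ∩ Sband n ϖ with hF
  have hFclosed : IsClosed F := (isClosed_Sgeq s).inter isClosed_Sband
  have hFne : F.Nonempty := ⟨zcen n s, zcen_mem hn hϖ s⟩
  set u := Pband n ϖ x with hu
  set δ := infDist u F with hδ
  set d := ‖u - Pgeq n s u‖ with hd
  have hδ0 : 0 ≤ δ := infDist_nonneg
  have huz : ‖u - zcen n s‖ ≤ R :=
    le_trans (Pband_nonexp' hn hϖ x (zcen_mem hn hϖ s).2) hx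
  -- δ ≤ R * d via the ball lemma
  obtain ⟨y, hyF, hy⟩ := near_ball hn hϖ s u (Pband_mem_Sband n ϖ hn hϖ x)
  have hδRd : δ ≤ R * d := by
    calc δ ≤ dist u y := infDist_le_dist_of_mem hyF
    _ = ‖u - y‖ := dist_eq_norm u y
    _ ≤ ‖u - zcen n s‖ * d := hy
    _ ≤ R * d := mul_le_mul_of_nonneg_right huz (norm_nonneg _)
  -- attained point
  obtain ⟨c, hcF, hc⟩ := hFclosed.exists_infDist_eq_dist hFne u
  have hfirm := Pgeq_firm s u (hcF.1)
  have hucδ : ‖u - c‖ = δ := by rw [hδ, hc, dist_eq_norm]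
  have hsq : ‖Pgeq n s u - c‖^2 ≤ (1 - 1/R^2) * δ^2 := by
    have hR0 : 0 < R := by linarith
    have h2 : d^2 ≥ δ^2 / R^2 := by
      rw [ge_iff_le, div_le_iff₀ (by positivity)]
      nlinarith [norm_nonneg (u - Pgeq n s u)]
    have h3 : ‖Pgeq n s u - c‖^2 ≤ δ^2 - d^2 := by
      rw [← hucδ] at *
      nlinarith [hfirm]
    have h4 : δ^2 - d^2 ≤ (1 - 1/R^2) * δ^2 := by
      have : δ^2 / R^2 = (1/R^2) * δ^2 := by ring
      nlinarith [h2]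
    linarith
  have hfinal : ‖Pgeq n s u - c‖ ≤ Real.sqrt (1 - 1/R^2) * δ := by
    apply le_of_sq_le_sq'
    · rw [mul_pow, Real.sq_sqrt]
      · exact hsq
      · have hR0 : 0 < R := by linarith
        have : 1/R^2 ≤ 1 := by
          rw [div_le_one (by positivity)]
          nlinarith
        linarith
    · exact mul_nonneg (Real.sqrt_nonneg _) hδ0
  -- infDist u F ≤ infDist x F
  have hux : δ ≤ infDist x F := by
    obtain ⟨c', hc'F, hc'⟩ := hFclosed.exists_infDist_eq_dist hFne x
    calc δ ≤ dist u c' := infDist_le_dist_of_mem hc'F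
    _ = ‖Pband n ϖ x - c'‖ := dist_eq_norm _ _
    _ ≤ ‖x - c'‖ := Pband_nonexp' hn hϖ x hc'F.2
    _ = infDist x F := by rw [hc', dist_eq_norm]
  calc infDist (Pgeq n s u) F ≤ dist (Pgeq n s u) c := infDist_le_dist_of_mem hcF
  _ = ‖Pgeq n s u - c‖ := dist_eq_norm _ _
  _ ≤ Real.sqrt (1 - 1/R^2) * δ := hfinal
  _ ≤ Real.sqrt (1 - 1/R^2) * infDist x F :=
      mul_le_mul_of_nonneg_left hux (Real.sqrt_nonneg _)

end Sets


end AuxAPB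

open Metric in
/-- the AP-B iteration `m_0 = |s|`, `m_{i+1} = P_{≥|s|}(P_ϖ m_i)` converges
geometrically and monotonically to some `m† ∈ S_{≥|s|} ∩ S_ϖ`. -/
theorem APB_geometric_monotone_convergence
    (n ϖ : ℕ) (hn : 1 ≤ n) (hϖ : 1 ≤ ϖ) (s : EuclideanSpace ℝ (Fin n))
    (m : ℕ → EuclideanSpace ℝ (Fin n))
    (hm0 : ∀ j, m 0 j = |s j|)
    (hms : ∀ i, m (i + 1) = Pgeq n s (Pband n ϖ (m i))) :
    ∃ mdag ∈ Sgeq n s ∩ Sband n ϖ, ∃ γ : ℝ, 0 < γ ∧ ∃ r : ℝ, 0 < r ∧ r < 1 ∧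
      (∀ i, ‖m i - mdag‖ ≤ γ * r ^ i) ∧
      (∀ i, ‖m (i + 1) - mdag‖ ≤ ‖m i - mdag‖) ∧
      Filter.Tendsto m Filter.atTop (nhds mdag) := by
  have hn0 : 0 < n := hn
  set F := Sgeq n s ∩ Sband n ϖ with hFdef
  have hFclosed : IsClosed F := (isClosed_Sgeq s).inter isClosed_Sband
  have hzF : zcen n s ∈ F := zcen_mem hn0 hϖ s
  have hFne : F.Nonempty := ⟨zcen n s, hzF⟩
  -- Fejér monotonicity
  have hfejer : ∀ (x : EuclideanSpace ℝ (Fin n)), ∀ c ∈ F,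
      ‖Pgeq n s (Pband n ϖ x) - c‖ ≤ ‖x - c‖ := fun x c hc =>
    (Pgeq_nonexp s (Pband n ϖ x) hc.1).trans (Pband_nonexp' hn0 hϖ x hc.2)
  set R : ℝ := ‖m 0 - zcen n s‖ + 2 with hRdef
  have hR2 : 2 ≤ R := by have := norm_nonneg (m 0 - zcen n s); linarith
  have hR1 : 1 ≤ R := by linarith
  have hbound : ∀ i, ‖m i - zcen n s‖ ≤ R := by
    intro i
    induction i with
    | zero => linarith
    | succ i ih =>
        rw [hms i]
        exact (hfejer (m i) (zcen n s) hzF).trans ih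
  set r : ℝ := Real.sqrt (1 - 1/R^2) with hrdef
  have hRsq : (1:ℝ)/R^2 ≤ 1/4 := by
    rw [div_le_div_iff₀ (by nlinarith) (by norm_num)]
    nlinarith
  have hrsq : r^2 = 1 - 1/R^2 := Real.sq_sqrt (by linarith)
  have hr0 : 0 < r := Real.sqrt_pos.mpr (by linarith)
  have hr1 : r < 1 := by
    have hRpos : (0:ℝ) < 1/R^2 := by positivity
    nlinarith [hrsq]
  set D0 : ℝ := infDist (m 0) F with hD0def
  have hD0 : 0 ≤ D0 := infDist_nonneg
  -- geometric decay of infDist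
  have hD : ∀ i, infDist (m i) F ≤ D0 * r ^ i := by
    intro i
    induction i with
    | zero => simp [hD0def]
    | succ i ih =>
        rw [hms i]
        calc infDist (Pgeq n s (Pband n ϖ (m i))) F
            ≤ r * infDist (m i) F := infdist_step hn0 hϖ s R hR1 (m i) (hbound i)
        _ ≤ r * (D0 * r ^ i) := mul_le_mul_of_nonneg_left ih hr0.le
        _ = D0 * r ^ (i + 1) := by ring
  -- geometric step sizes
  have hstep : ∀ i, dist (m i) (m (i + 1)) ≤ (2 * D0) * r ^ i := by
    intro i
    obtain ⟨c, hcF, hc⟩ := hFclosed.exists_infDist_eq_dist hFne (m i)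
    have h1 : dist (m (i+1)) c ≤ dist (m i) c := by
      rw [dist_eq_norm, dist_eq_norm, hms i]
      exact hfejer (m i) c hcF
    calc dist (m i) (m (i+1)) ≤ dist (m i) c + dist c (m (i+1)) := dist_triangle _ _ _
    _ = dist (m i) c + dist (m (i+1)) c := by rw [dist_comm c]
    _ ≤ 2 * dist (m i) c := by linarith
    _ = 2 * infDist (m i) F := by rw [hc]
    _ ≤ 2 * (D0 * r ^ i) := by linarith [hD i]
    _ = (2 * D0) * r ^ i := by ring
  have hcauchy : CauchySeq m := cauchySeq_of_le_geometric r (2 * D0) hr1 hstep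
  obtain ⟨mdag, hmd⟩ := cauchySeq_tendsto_of_complete hcauchy
  -- mdag ∈ F
  have hinf0 : infDist mdag F = 0 := by
    have h1 : Filter.Tendsto (fun i => infDist (m i) F) Filter.atTop (nhds (infDist mdag F)) :=
      ((continuous_infDist_pt F).continuousAt.tendsto).comp hmd
    have h2 : Filter.Tendsto (fun i => D0 * r ^ i) Filter.atTop (nhds 0) := by
      rw [show (0:ℝ) = D0 * 0 by ring]
      exact (tendsto_pow_atTop_nhds_zero_of_lt_one hr0.le hr1).const_mul D0
    have h3 : infDist mdag F ≤ 0 :=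
      le_of_tendsto_of_tendsto h1 h2 (Filter.eventually_atTop.mpr ⟨0, fun i _ => hD i⟩)
    linarith [infDist_nonneg (x := mdag) (s := F)]
  have hmdF : mdag ∈ F := (hFclosed.mem_iff_infDist_zero hFne).mpr hinf0
  -- assemble
  have h1r : (0:ℝ) < 1 - r := by linarith
  have hγ : 0 < 2 * D0 / (1 - r) + 1 := by
    have := div_nonneg (by linarith : (0:ℝ) ≤ 2 * D0) h1r.le
    linarith
  refine ⟨mdag, hmdF, 2 * D0 / (1 - r) + 1, hγ, r, hr0, hr1, ?_, ?_, hmd⟩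
  · intro i
    have hgeo := dist_le_of_le_geometric_of_tendsto r (2 * D0) hr1 hstep hmd i
    rw [← dist_eq_norm]
    calc dist (m i) mdag ≤ (2 * D0) * r ^ i / (1 - r) := hgeo
    _ = (2 * D0 / (1 - r)) * r ^ i := by ring
    _ ≤ (2 * D0 / (1 - r) + 1) * r ^ i := by
        apply mul_le_mul_of_nonneg_right _ (pow_nonneg hr0.le i)
        linarith
  · intro i
    rw [hms i]
    exact hfejer (m i) mdag hmdF
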